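/- Let X, Y, Z be Banach spaces, P : X → Y a bounded linear map, and ι : X → Z a compact linear map. Suppose there exists C > 0 such that ‖u‖_X ≤ C(‖P u‖_Y + ‖ι u‖_Z) for all u ∈ X. Then the kernel of P is finite dimensional and the range of P is closed. -/

import Mathlib

open Metric Set

theorem extract_subseq
    {X Z : Type*}
    [NormedAddCommGroup X] [NormedSpace ℝ X]
    [NormedAddCommGroup Z] [NormedSpace ℝ Z]
    (ι : X →L[ℝ] Z) (hι : IsCompactOperator ι)
    (u : ℕ → X) (R : ℝ) (hu : ∀ n, ‖u n‖ ≤ R) :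
    ∃ φ : ℕ → ℕ, StrictMono φ ∧ ∃ z : Z, Filter.Tendsto (fun n => ι (u (φ n))) Filter.atTop (nhds z) := by
  obtain ⟨K, hK, hKsub⟩ :=
    IsCompactOperator.image_closedBall_subset_compact (f := (ι : X →ₗ[ℝ] Z)) hι R
  have hmem : ∀ n, ι (u n) ∈ K := fun n =>
    hKsub ⟨u n, by simpa [Metric.mem_closedBall, dist_eq_norm] using hu n, rfl⟩
  obtain ⟨z, _, φ, hφ, hconv⟩ := hK.isSeqCompact hmem
  exact ⟨φ, hφ, z, hconv⟩

theorem semiFredholm_finiteDim_ker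
    {X Y Z : Type*}
    [NormedAddCommGroup X] [NormedSpace ℝ X] [CompleteSpace X]
    [NormedAddCommGroup Y] [NormedSpace ℝ Y]
    [NormedAddCommGroup Z] [NormedSpace ℝ Z]
    (P : X →L[ℝ] Y) (ι : X →L[ℝ] Z) (hι : IsCompactOperator ι)
    (C : ℝ) (hC : 0 < C) (hest : ∀ u : X, ‖u‖ ≤ C * (‖P u‖ + ‖ι u‖)) :
    FiniteDimensional ℝ (LinearMap.ker (P : X →ₗ[ℝ] Y)) := by
  apply FiniteDimensional.of_isCompact_closedBall₀ (𝕜 := ℝ) (r := 1) one_pos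
  apply IsSeqCompact.isCompact
  intro x hx
  set u : ℕ → X := fun n => (x n : X) with hu_def
  have hubd : ∀ n, ‖u n‖ ≤ 1 := fun n => by
    have := hx n
    rw [Metric.mem_closedBall, dist_zero_right] at this
    exact this
  obtain ⟨φ, hφ, z, hz⟩ := extract_subseq ι hι u 1 hubd
  have hker : ∀ n, P (u n) = 0 := fun n => (x n).2
  have hcauchy : CauchySeq (fun n => u (φ n)) := by
    rw [Metric.cauchySeq_iff]
    intro ε hε
    obtain ⟨N, hN⟩ := (Metric.cauchySeq_iff.mp hz.cauchySeq) (ε / C) (by positivity)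
    refine ⟨N, fun m hm n hn => ?_⟩
    have h2 := hN m hm n hn
    rw [dist_eq_norm] at h2 ⊢
    calc ‖u (φ m) - u (φ n)‖
        ≤ C * (‖P (u (φ m) - u (φ n))‖ + ‖ι (u (φ m) - u (φ n))‖) := hest _
      _ = C * ‖ι (u (φ m)) - ι (u (φ n))‖ := by rw [map_sub, map_sub, hker, hker]; simp
      _ < C * (ε / C) := by gcongr
      _ = ε := by field_simp
  obtain ⟨w, hw⟩ := cauchySeq_tendsto_of_complete hcauchy
  have hwker : w ∈ LinearMap.ker (P : X →ₗ[ℝ] Y) :=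
    (ContinuousLinearMap.isClosed_ker P).mem_of_tendsto hw (Filter.Eventually.of_forall fun n => hker _)
  have hwnorm : ‖w‖ ≤ 1 := by
    have h1 : Filter.Tendsto (fun n => ‖u (φ n)‖) Filter.atTop (nhds ‖w‖) :=
      ((continuous_norm.tendsto w).comp hw)
    exact le_of_tendsto h1 (Filter.Eventually.of_forall fun n => hubd _)
  refine ⟨⟨w, hwker⟩, ?_, φ, hφ, ?_⟩
  · rwa [Metric.mem_closedBall, dist_zero_right]
  · exact (Topology.IsEmbedding.subtypeVal.tendsto_nhds_iff).mpr hw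

theorem bounded_below_on_compl
    {X Y Z : Type*}
    [NormedAddCommGroup X] [NormedSpace ℝ X] [CompleteSpace X]
    [NormedAddCommGroup Y] [NormedSpace ℝ Y]
    [NormedAddCommGroup Z] [NormedSpace ℝ Z]
    (P : X →L[ℝ] Y) (ι : X →L[ℝ] Z) (hι : IsCompactOperator ι)
    (C : ℝ) (hC : 0 < C) (hest : ∀ u : X, ‖u‖ ≤ C * (‖P u‖ + ‖ι u‖))
    (M : Submodule ℝ X) (hM : IsClosed (M : Set X))
    (hdisj : M ⊓ LinearMap.ker (P : X →ₗ[ℝ] Y) = ⊥) :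
    ∃ c : ℝ, 0 < c ∧ ∀ u ∈ M, ‖u‖ ≤ c * ‖P u‖ := by
  by_contra h
  push_neg at h
  have key : ∀ n : ℕ, ∃ u : X, u ∈ M ∧ ‖u‖ = 1 ∧ ‖P u‖ < 1 / (n + 1) := by
    intro n
    obtain ⟨v, hvM, hv⟩ := h ((n : ℝ) + 1) (by positivity)
    have hv0 : v ≠ 0 := by rintro rfl; simp at hv
    refine ⟨‖v‖⁻¹ • v, M.smul_mem _ hvM, ?_, ?_⟩
    · rw [norm_smul, norm_inv, norm_norm, inv_mul_cancel₀ (norm_ne_zero_iff.mpr hv0)]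
    · have hvpos : 0 < ‖v‖ := norm_pos_iff.mpr hv0
      rw [map_smul, norm_smul, norm_inv, norm_norm,
        inv_mul_lt_iff₀ hvpos, mul_one_div, lt_div_iff₀ (by positivity)]
      nlinarith [hv]
  choose u huM hunorm huP using key
  have hPlim : Filter.Tendsto (fun n => P (u n)) Filter.atTop (nhds 0) := by
    rw [tendsto_zero_iff_norm_tendsto_zero]
    apply squeeze_zero (fun n => norm_nonneg _) (fun n => (huP n).le)
    exact tendsto_one_div_add_atTop_nhds_zero_nat
  obtain ⟨φ, hφ, z, hz⟩ := extract_subseq ι hι u 1 (fun n => (hunorm n).le)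
  have hcauchy : CauchySeq (fun n => u (φ n)) := by
    rw [Metric.cauchySeq_iff]
    intro ε hε
    have hε3 : 0 < ε / (3 * C) := by positivity
    have hPlim' := (hPlim.comp hφ.tendsto_atTop)
    rw [tendsto_zero_iff_norm_tendsto_zero] at hPlim'
    obtain ⟨N1, hN1⟩ := (Metric.tendsto_atTop.mp hPlim') (ε / (3 * C)) hε3
    obtain ⟨N2, hN2⟩ := (Metric.cauchySeq_iff.mp hz.cauchySeq) (ε / (3 * C)) hε3
    refine ⟨max N1 N2, fun m hm n hn => ?_⟩
    have hm1 := hN1 m (le_of_max_le_left hm)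
    have hn1 := hN1 n (le_of_max_le_left hn)
    simp only [Function.comp, Real.dist_eq, sub_zero] at hm1 hn1
    have h2 := hN2 m (le_of_max_le_right hm) n (le_of_max_le_right hn)
    rw [dist_eq_norm] at h2 ⊢
    calc ‖u (φ m) - u (φ n)‖ ≤ C * (‖P (u (φ m) - u (φ n))‖ + ‖ι (u (φ m) - u (φ n))‖) := hest _
      _ ≤ C * ((‖P (u (φ m))‖ + ‖P (u (φ n))‖) + ‖ι (u (φ m)) - ι (u (φ n))‖) := by
          gcongr
          · rw [map_sub]; exact norm_sub_le _ _
          · rw [map_sub]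
      _ < C * ((ε / (3 * C) + ε / (3 * C)) + ε / (3 * C)) := by
          gcongr
          · rw [abs_of_nonneg (norm_nonneg _)] at hm1; exact hm1
          · rw [abs_of_nonneg (norm_nonneg _)] at hn1; exact hn1
      _ = ε := by field_simp; ring
  obtain ⟨w, hw⟩ := cauchySeq_tendsto_of_complete hcauchy
  have hwM : w ∈ M := hM.mem_of_tendsto hw (Filter.Eventually.of_forall fun n => huM _)
  have hwnorm : ‖w‖ = 1 := by
    have h1 : Filter.Tendsto (fun n => ‖u (φ n)‖) Filter.atTop (nhds ‖w‖) :=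
      ((continuous_norm.tendsto w).comp hw)
    have h2 : (fun n => ‖u (φ n)‖) = fun _ => (1 : ℝ) := funext fun n => hunorm _
    rw [h2] at h1
    exact tendsto_nhds_unique h1 tendsto_const_nhds
  have hwP : P w = 0 :=
    tendsto_nhds_unique ((P.continuous.tendsto w).comp hw) (hPlim.comp hφ.tendsto_atTop)
  have : w ∈ M ⊓ LinearMap.ker (P : X →ₗ[ℝ] Y) := ⟨hwM, hwP⟩
  rw [hdisj, Submodule.mem_bot] at this
  simp [this] at hwnorm

/-- The semi-Fredholm estimate: if `P : X → Y` is a bounded linear map between Banach spaces,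
`ι : X → Z` is a compact linear map to a Banach space, and
`‖u‖ ≤ C (‖P u‖ + ‖ι u‖)` for all `u`, then `ker P` is finite dimensional and
the range of `P` is closed. -/
theorem semiFredholm_estimate_finiteDim_ker_and_closed_range
    {X Y Z : Type*}
    [NormedAddCommGroup X] [NormedSpace ℝ X] [CompleteSpace X]
    [NormedAddCommGroup Y] [NormedSpace ℝ Y] [CompleteSpace Y]
    [NormedAddCommGroup Z] [NormedSpace ℝ Z] [CompleteSpace Z]
    (P : X →L[ℝ] Y) (ι : X →L[ℝ] Z) (hι : IsCompactOperator ι)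
    (C : ℝ) (hC : 0 < C) (hest : ∀ u : X, ‖u‖ ≤ C * (‖P u‖ + ‖ι u‖)) :
    FiniteDimensional ℝ (LinearMap.ker (P : X →ₗ[ℝ] Y)) ∧ IsClosed (LinearMap.range (P : X →ₗ[ℝ] Y) : Set Y) := by

  have hfin : FiniteDimensional ℝ (LinearMap.ker (P : X →ₗ[ℝ] Y)) :=
    semiFredholm_finiteDim_ker P ι hι C hC hest
  refine ⟨hfin, ?_⟩
  -- complement of the kernel
  have hcc : (LinearMap.ker (P : X →ₗ[ℝ] Y)).ClosedComplemented :=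
    Submodule.ClosedComplemented.of_finiteDimensional _
  obtain ⟨q, hqclosed, hcompl⟩ := hcc.exists_isClosed_isCompl
  have hdisj : q ⊓ LinearMap.ker (P : X →ₗ[ℝ] Y) = ⊥ := by
    rw [inf_comm]
    exact disjoint_iff.mp hcompl.disjoint
  obtain ⟨c, hc, hcb⟩ := bounded_below_on_compl P ι hι C hC hest q hqclosed hdisj
  -- P restricted to q
  set g : q →L[ℝ] Y := P.comp (q.subtypeL) with hg_def
  have hanti : AntilipschitzWith (⟨c, hc.le⟩ : NNReal) g :=
    g.antilipschitz_of_bound fun x => by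
      exact hcb (x : X) x.2
  have hqcomplete : CompleteSpace q := hqclosed.completeSpace_coe
  have hclosed_range : IsClosed (Set.range g) :=
    hanti.isClosed_range g.uniformContinuous
  have hrange_eq : (LinearMap.range (P : X →ₗ[ℝ] Y) : Set Y) = Set.range g := by
    ext y
    constructor
    · rintro ⟨x, rfl⟩
      have hx : x ∈ LinearMap.ker (P : X →ₗ[ℝ] Y) ⊔ q := by rw [hcompl.sup_eq_top]; trivial
      obtain ⟨k, hk, m, hm, rfl⟩ := Submodule.mem_sup.mp hx
      exact ⟨⟨m, hm⟩, by simp [hg_def, show P k = 0 from LinearMap.mem_ker.mp hk]⟩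
    · rintro ⟨⟨m, hm⟩, rfl⟩
      exact ⟨m, rfl⟩
  rw [hrange_eq]
  exact hclosed_range
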